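/- Let f be a real polynomial of degree N ≥ 1 that has N real roots counting multiplicity, and let m(f) denote the maximum multiplicity among its roots. Then for every real s ≠ 0, the polynomial g_s(u) = f(u) + s f'(u) also has N real roots counting multiplicity, and its maximum root multiplicity satisfies m(g_s) = max{m(f) − 1, 1}. -/

import Mathlib

open Polynomial Filter Set

private lemma aux_tendsto_poly_exp (q : ℝ[X]) {b : ℝ} (hb : 0 < b) :
    Tendsto (fun y : ℝ => q.eval y * Real.exp (-(b * y))) atTop (nhds 0) := by
  have key : ∀ i : ℕ, Tendsto (fun y : ℝ => y ^ i * Real.exp (-(b * y))) atTop (nhds 0) := by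
    intro i
    have hby : Tendsto (fun y : ℝ => b * y) atTop atTop :=
      Filter.Tendsto.const_mul_atTop hb tendsto_id
    have h1 : Tendsto (fun y : ℝ => (b * y) ^ i * Real.exp (-(b * y))) atTop (nhds 0) :=
      (Real.tendsto_pow_mul_exp_neg_atTop_nhds_zero i).comp hby
    have h2 := h1.const_mul ((1 / b) ^ i)
    rw [mul_zero] at h2
    refine h2.congr fun y => ?_
    rw [← mul_assoc, ← mul_pow]
    field_simp
  have hsum : Tendsto (fun y : ℝ => ∑ i ∈ Finset.range (q.natDegree + 1),
      q.coeff i * (y ^ i * Real.exp (-(b * y)))) atTop (nhds 0) := by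
    have := tendsto_finset_sum (Finset.range (q.natDegree + 1))
        (fun i _ => (key i).const_mul (q.coeff i))
    simpa using this
  refine hsum.congr fun y => ?_
  rw [Polynomial.eval_eq_sum_range, Finset.sum_mul]
  exact Finset.sum_congr rfl fun i _ => by ring

private lemma exists_deriv_zero_below_core {h : ℝ → ℝ} (hdiff : Differentiable ℝ h)
    (hlim : Tendsto h atBot (nhds 0)) {a b : ℝ} (hba : b < a) (ha : h a = 0)
    (hb : 0 < h b) : ∃ c, c < a ∧ deriv h c = 0 := by
  have hev : ∀ᶠ x in atBot, |h x| < h b := by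
    have h1 : ∀ᶠ y in nhds (0 : ℝ), |y| < h b := by
      simpa using eventually_abs_sub_lt (0 : ℝ) hb
    exact hlim.eventually h1
  obtain ⟨m0, hm0⟩ := eventually_atBot.1 hev
  set m : ℝ := min m0 (b - 1) with hm
  have hmb : m < b := lt_of_le_of_lt (min_le_right _ _) (by linarith)
  have hma : m < a := hmb.trans hba
  have hmabs : |h m| < h b := hm0 m (min_le_left _ _)
  obtain ⟨c, hcmem, hcmax⟩ := isCompact_Icc.exists_isMaxOn (Set.nonempty_Icc.2 hma.le)
    hdiff.continuous.continuousOn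
  have hbc : h b ≤ h c := hcmax (Set.mem_Icc.2 ⟨hmb.le, hba.le⟩)
  have hcm : m < c := by
    rcases lt_or_eq_of_le (Set.mem_Icc.1 hcmem).1 with h' | h'
    · exact h'
    · exfalso; rw [h'] at hmabs
      exact absurd (le_trans hbc (le_abs_self _)) (not_le.2 hmabs)
  have hca : c < a := by
    rcases lt_or_eq_of_le (Set.mem_Icc.1 hcmem).2 with h' | h'
    · exact h'
    · exfalso; rw [h', ha] at hbc; linarith
  refine ⟨c, hca, ?_⟩
  exact (hcmax.isLocalMax (Icc_mem_nhds hcm hca)).deriv_eq_zero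

private lemma exists_deriv_zero_below {h : ℝ → ℝ} (hdiff : Differentiable ℝ h)
    (hlim : Tendsto h atBot (nhds 0)) {a b : ℝ} (hba : b < a) (ha : h a = 0)
    (hb : h b ≠ 0) : ∃ c, c < a ∧ deriv h c = 0 := by
  rcases hb.lt_or_gt with hb' | hb'
  · obtain ⟨c, hc, hc0⟩ := exists_deriv_zero_below_core (h := fun x => -h x) hdiff.neg
      (by simpa using hlim.neg) hba (by simp [ha]) (by simpa using hb')
    refine ⟨c, hc, ?_⟩
    have : deriv (fun x => -h x) c = -deriv h c := deriv.neg (f := h) (x := c)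
    rw [hc0] at this
    linarith
  · exact exists_deriv_zero_below_core hdiff hlim hba ha hb'

private lemma exists_deriv_zero_above {h : ℝ → ℝ} (hdiff : Differentiable ℝ h)
    (hlim : Tendsto h atTop (nhds 0)) {a b : ℝ} (hab : a < b) (ha : h a = 0)
    (hb : h b ≠ 0) : ∃ c, a < c ∧ deriv h c = 0 := by
  have hHdiff : Differentiable ℝ (fun x : ℝ => h (-x)) :=
    hdiff.comp differentiable_neg
  have hHlim : Tendsto (fun x : ℝ => h (-x)) atBot (nhds 0) :=
    hlim.comp tendsto_neg_atBot_atTop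
  obtain ⟨c, hc, hc0⟩ := exists_deriv_zero_below hHdiff hHlim
    (show -b < -a by linarith) (by simpa using ha) (by simpa using hb)
  refine ⟨-c, by linarith, ?_⟩
  have hD : HasDerivAt (fun x : ℝ => h (-x)) (deriv h (-c) * (-1)) c := by
    have := ((hdiff (-c)).hasDerivAt).comp c (hasDerivAt_neg c)
    exact this
  have h2 := hD.deriv
  rw [hc0] at h2
  linarith

private lemma rm_add_eq {p q : ℝ[X]} (a : ℝ) (hpq : p + q ≠ 0) (hq : q ≠ 0)
    (hlt : rootMultiplicity a q < rootMultiplicity a p) :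
    rootMultiplicity a (p + q) = rootMultiplicity a q := by
  have le1 : rootMultiplicity a q ≤ rootMultiplicity a (p + q) := by
    have := rootMultiplicity_add a hpq
    omega
  have hneg : rootMultiplicity a (-p) = rootMultiplicity a p := by
    by_cases hp : p = 0
    · simp [hp]
    · have h1 : -p = C (-1 : ℝ) * p := by
        rw [map_neg, map_one, neg_one_mul]
      rw [h1, rootMultiplicity_mul (by simpa using hp), rootMultiplicity_C, zero_add]
  have key : min (rootMultiplicity a (p + q)) (rootMultiplicity a (-p))
      ≤ rootMultiplicity a q := by
    have h2 : (p + q) + (-p) = q := by ring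
    have := rootMultiplicity_add (p := p + q) (q := -p) a (by rw [h2]; exact hq)
    rwa [h2] at this
  rw [hneg] at key
  omega



open Polynomial

/-- If a real polynomial `f` of degree `N ≥ 1` has `N` real roots
counting multiplicity, with maximum root multiplicity `m(f)`, then for every `s ≠ 0`
the polynomial `f + s f'` also has `N` real roots counting multiplicity, and its
maximum root multiplicity equals `max (m(f) − 1) 1`. -/
theorem real_rooted_plus_scaled_derivative (N : ℕ) (hN : 1 ≤ N)
    (f : Polynomial ℝ) (hdeg : f.natDegree = N)
    (hsplit : f.roots.card = N)
    (s : ℝ) (hs : s ≠ 0) :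
    (f + C s * derivative f).roots.card = N ∧
    ((f + C s * derivative f).roots.toFinset.sup
        fun r => (f + C s * derivative f).roots.count r)
      = max ((f.roots.toFinset.sup fun r => f.roots.count r) - 1) 1 := by
  set g : ℝ[X] := f + C s * derivative f with hgdef
  have hf0 : f ≠ 0 := by
    intro h; rw [h, natDegree_zero] at hdeg; omega
  have hf'0 : derivative f ≠ 0 := by
    intro h
    have := natDegree_eq_zero_of_derivative_eq_zero h
    omega
  have hCs0 : C s * derivative f ≠ 0 := mul_ne_zero (by simpa using hs) hf'0
  -- degree of g
  have hdlt : (C s * derivative f).degree < f.degree := by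
    calc (C s * derivative f).degree ≤ (C s).degree + (derivative f).degree :=
          degree_mul_le _ _
    _ ≤ 0 + (derivative f).degree := by
          exact add_le_add degree_C_le le_rfl
    _ = (derivative f).degree := by rw [zero_add]
    _ < f.degree := degree_derivative_lt hf0
  have hgdeg : g.natDegree = N := by
    rw [hgdef, natDegree_add_eq_left_of_degree_lt hdlt, hdeg]
  have hg0 : g ≠ 0 := by
    intro h; rw [h, natDegree_zero] at hgdeg; omega
  -- multiplicities at roots of f
  have hmult : ∀ r : ℝ, f.IsRoot r →
      g.rootMultiplicity r = f.rootMultiplicity r - 1 := by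
    intro r hroot
    have hm1 : 1 ≤ f.rootMultiplicity r := (rootMultiplicity_pos hf0).2 hroot
    have hd : (derivative f).rootMultiplicity r = f.rootMultiplicity r - 1 :=
      derivative_rootMultiplicity_of_root hroot
    have hCs' : (C s * derivative f).rootMultiplicity r = f.rootMultiplicity r - 1 := by
      rw [rootMultiplicity_mul hCs0, rootMultiplicity_C, zero_add, hd]
    rw [hgdef, rm_add_eq r (by rw [← hgdef]; exact hg0) hCs0 (by omega), hCs']
  -- notation
  set T : Finset ℝ := f.roots.toFinset with hTdef
  set U : Finset ℝ := g.roots.toFinset with hUdef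
  set S : Finset ℝ := U \ T with hSdef
  have hT_ne : T.Nonempty := by
    rw [hTdef]
    rw [Multiset.toFinset_nonempty]
    intro h
    rw [h] at hsplit
    simp at hsplit
    omega
  have hk1 : 1 ≤ T.card := Finset.card_pos.2 hT_ne
  have hTroot : ∀ x ∈ T, f.IsRoot x := fun x hx =>
    isRoot_of_mem_roots (Multiset.mem_toFinset.1 hx)
  have hcount_f : ∀ x ∈ T, 1 ≤ f.roots.count x := fun x hx =>
    Multiset.count_pos.2 (Multiset.mem_toFinset.1 hx)
  have hgT : ∀ x ∈ T, g.roots.count x = f.roots.count x - 1 := by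
    intro x hx
    rw [count_roots, count_roots, hmult x (hTroot x hx)]
  -- sum over T of f-counts
  have hTsum : ∑ x ∈ T, f.roots.count x = N := by
    rw [hTdef, Multiset.toFinset_sum_count_eq, hsplit]
  have hkN : T.card ≤ N := by
    calc T.card = ∑ _x ∈ T, 1 := by simp
    _ ≤ ∑ x ∈ T, f.roots.count x := Finset.sum_le_sum hcount_f
    _ = N := hTsum
  have hTsum_g : ∑ x ∈ T, g.roots.count x = N - T.card := by
    have h1 : ∑ x ∈ T, (g.roots.count x + 1) = N := by
      rw [← hTsum]
      refine Finset.sum_congr rfl fun x hx => ?_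
      rw [hgT x hx]
      have := hcount_f x hx
      omega
    rw [Finset.sum_add_distrib] at h1
    simp only [Finset.sum_const, smul_eq_mul, mul_one] at h1
    omega
  -- the analytic function
  set h : ℝ → ℝ := fun x => Real.exp (x / s) * f.eval x with hhdef
  have hdiff : Differentiable ℝ h :=
    (Real.differentiable_exp.comp (differentiable_id.div_const s)).mul f.differentiable
  have hderiv : ∀ x : ℝ, HasDerivAt h (Real.exp (x / s) / s * g.eval x) x := by
    intro x
    have hexp : HasDerivAt (fun y : ℝ => Real.exp (y / s)) (Real.exp (x / s) * (1 / s)) x := by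
      have h1 : HasDerivAt (fun y : ℝ => y / s) (1 / s) x := (hasDerivAt_id x).div_const s
      exact (Real.hasDerivAt_exp (x / s)).comp x h1
    have := hexp.mul (f.hasDerivAt x)
    have heq : Real.exp (x / s) * (1 / s) * f.eval x
        + Real.exp (x / s) * (derivative f).eval x
        = Real.exp (x / s) / s * g.eval x := by
      rw [hgdef]
      simp only [eval_add, eval_mul, eval_C]
      field_simp
    rwa [heq] at this
  have hroot_of_deriv : ∀ x : ℝ, deriv h x = 0 → g.IsRoot x := by
    intro x hx
    have := (hderiv x).deriv
    rw [hx] at this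
    have hne : Real.exp (x / s) / s ≠ 0 := div_ne_zero (Real.exp_ne_zero _) hs
    have := this.symm
    exact (mul_eq_zero.1 this).resolve_left hne
  have hzeroT : ∀ x ∈ T, h x = 0 := by
    intro x hx
    rw [hhdef]
    simp [(hTroot x hx).eq_zero]
  -- Rolle between consecutive roots
  have hbetween : ∀ x ∈ T, ∀ y ∈ T, x < y → ∃ z, x < z ∧ z < y ∧ g.IsRoot z := by
    intro x hx y hy hxy
    obtain ⟨z, hz, hz0⟩ := exists_deriv_eq_zero hxy hdiff.continuous.continuousOn
      ((hzeroT x hx).trans (hzeroT y hy).symm)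
    exact ⟨z, hz.1, hz.2, hroot_of_deriv z hz0⟩
  -- the extra root beyond the extreme roots
  have hfar : ∃ c, g.IsRoot c ∧ ((∀ x ∈ T, c < x) ∨ (∀ x ∈ T, x < c)) := by
    rcases hs.lt_or_gt with hs' | hs'
    · -- s < 0 : tends to 0 at +∞, extra root above max
      set a : ℝ := T.max' hT_ne with hadef
      have haT : a ∈ T := T.max'_mem hT_ne
      have hb : h (a + 1) ≠ 0 := by
        have : ¬ f.IsRoot (a + 1) := by
          intro hr
          have : a + 1 ∈ T := Multiset.mem_toFinset.2 ((mem_roots hf0).2 hr)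
          have := T.le_max' _ this
          rw [← hadef] at this
          linarith
        rw [hhdef]
        exact mul_ne_zero (Real.exp_ne_zero _) this
      have hlim : Tendsto h atTop (nhds 0) := by
        have hb' : (0 : ℝ) < -1 / s := by
          rw [neg_div]
          exact neg_pos.2 (one_div_neg.2 hs')
        have := aux_tendsto_poly_exp f hb'
        refine this.congr fun x => ?_
        rw [hhdef, mul_comm]
        congr 1
        congr 1
        field_simp
      obtain ⟨c, hac, hc0⟩ := exists_deriv_zero_above hdiff hlim
        (show a < a + 1 by linarith) (hzeroT a haT) hb
      refine ⟨c, hroot_of_deriv c hc0, Or.inr fun x hx => ?_⟩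
      exact lt_of_le_of_lt (T.le_max' x hx) hac
    · -- s > 0 : tends to 0 at −∞, extra root below min
      set a : ℝ := T.min' hT_ne with hadef
      have haT : a ∈ T := T.min'_mem hT_ne
      have hb : h (a - 1) ≠ 0 := by
        have : ¬ f.IsRoot (a - 1) := by
          intro hr
          have : a - 1 ∈ T := Multiset.mem_toFinset.2 ((mem_roots hf0).2 hr)
          have := T.min'_le _ this
          rw [← hadef] at this
          linarith
        rw [hhdef]
        exact mul_ne_zero (Real.exp_ne_zero _) this
      have hlim : Tendsto h atBot (nhds 0) := by
        have hb' : (0 : ℝ) < 1 / s := by positivity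
        have hcore := aux_tendsto_poly_exp (f.comp (-X)) hb'
        have := hcore.comp tendsto_neg_atBot_atTop
        refine this.congr fun x => ?_
        rw [hhdef]
        simp only [Function.comp_apply, eval_comp, eval_neg, eval_X, neg_neg]
        rw [mul_comm]
        congr 1
        congr 1
        field_simp
      obtain ⟨c, hca, hc0⟩ := exists_deriv_zero_below hdiff hlim
        (show a - 1 < a by linarith) (hzeroT a haT) hb
      refine ⟨c, hroot_of_deriv c hc0, Or.inl fun x hx => ?_⟩
      exact lt_of_lt_of_le hca (T.min'_le x hx)
  -- S has at least T.card elements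
  obtain ⟨c, hcroot, hcside⟩ := hfar
  have hcU : c ∈ U := Multiset.mem_toFinset.2 ((mem_roots hg0).2 hcroot)
  have hcT : c ∉ T := by
    intro hc
    rcases hcside with h1 | h1
    · exact absurd (h1 c hc) (lt_irrefl c)
    · exact absurd (h1 c hc) (lt_irrefl c)
  have hSk : T.card ≤ S.card := by
    have hinter : T.card ≤ ((U.erase c) \ T).card + 1 := by
      refine Finset.card_le_diff_of_interleaved fun x hx y hy hxy _ => ?_
      obtain ⟨z, hxz, hzy, hzroot⟩ := hbetween x hx y hy hxy
      have hzU : z ∈ U := Multiset.mem_toFinset.2 ((mem_roots hg0).2 hzroot)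
      have hzc : z ≠ c := by
        intro h'
        rcases hcside with h1 | h1
        · have := h1 x hx; rw [h'] at hxz; linarith
        · have := h1 y hy; rw [h'] at hzy; linarith
      exact ⟨z, Finset.mem_erase.2 ⟨hzc, hzU⟩, hxz, hzy⟩
    have hsub : insert c ((U.erase c) \ T) ⊆ S := by
      intro z hz
      rcases Finset.mem_insert.1 hz with h' | h'
      · rw [h', hSdef]; exact Finset.mem_sdiff.2 ⟨hcU, hcT⟩
      · rw [hSdef]
        have h1 := Finset.mem_sdiff.1 h'
        exact Finset.mem_sdiff.2 ⟨Finset.mem_of_mem_erase h1.1, h1.2⟩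
    have hcnot : c ∉ (U.erase c) \ T := fun h' =>
      (Finset.notMem_erase c U) (Finset.mem_sdiff.1 h').1
    calc T.card ≤ ((U.erase c) \ T).card + 1 := hinter
    _ = (insert c ((U.erase c) \ T)).card := (Finset.card_insert_of_notMem hcnot).symm
    _ ≤ S.card := Finset.card_le_card hsub
  -- count identities
  have hScount : ∀ x ∈ S, 1 ≤ g.roots.count x := fun x hx =>
    Multiset.count_pos.2 (Multiset.mem_toFinset.1 (Finset.mem_sdiff.1 hx).1)
  have hSsum_ge : S.card ≤ ∑ x ∈ S, g.roots.count x := by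
    calc S.card = ∑ _x ∈ S, 1 := by simp
    _ ≤ _ := Finset.sum_le_sum hScount
  have hUsub : U ⊆ T ∪ S := by
    intro x hx
    by_cases hxT : x ∈ T
    · exact Finset.mem_union_left _ hxT
    · exact Finset.mem_union_right _ (Finset.mem_sdiff.2 ⟨hx, hxT⟩)
  have hcard : g.roots.card = ∑ x ∈ T, g.roots.count x + ∑ x ∈ S, g.roots.count x := by
    rw [← Multiset.toFinset_sum_count_eq g.roots, ← hUdef]
    rw [Finset.sum_subset hUsub (fun x _ hxU => Multiset.count_eq_zero.2
      (fun h' => hxU (Multiset.mem_toFinset.2 h')))]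
    exact Finset.sum_union (by rw [hSdef]; exact Finset.disjoint_sdiff)
  have hcard_le : g.roots.card ≤ N := by
    have := g.card_roots'
    omega
  have hScard_le : ∑ x ∈ S, g.roots.count x ≤ T.card := by omega
  have hSsum_eq : ∑ x ∈ S, g.roots.count x = S.card := by omega
  have hcardN : g.roots.card = N := by omega
  have hS1 : ∀ x ∈ S, g.roots.count x = 1 := by
    intro x hx
    by_contra hne
    have h2 : 2 ≤ g.roots.count x := by
      have := hScount x hx; omega
    have herase : S.card - 1 ≤ ∑ y ∈ S.erase x, g.roots.count y := by
      calc S.card - 1 = (S.erase x).card := (Finset.card_erase_of_mem hx).symm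
      _ = ∑ _y ∈ S.erase x, 1 := by simp
      _ ≤ _ := Finset.sum_le_sum fun y hy => hScount y (Finset.mem_of_mem_erase hy)
    have hsum : ∑ y ∈ S.erase x, g.roots.count y + g.roots.count x
        = ∑ y ∈ S, g.roots.count y := Finset.sum_erase_add S _ hx
    omega
  refine ⟨hcardN, ?_⟩
  -- the sup statement
  set Mf : ℕ := T.sup fun r => f.roots.count r with hMfdef
  have hMf1 : 1 ≤ Mf := by
    obtain ⟨x, hx⟩ := hT_ne
    exact le_trans (hcount_f x hx) (Finset.le_sup (f := fun r => f.roots.count r) hx)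
  have hS_ne : S.Nonempty := Finset.card_pos.1 (by omega)
  -- upper bound
  have hle : (U.sup fun r => g.roots.count r) ≤ max (Mf - 1) 1 := by
    refine Finset.sup_le fun x hx => ?_
    by_cases hxT : x ∈ T
    · have h1 : g.roots.count x = f.roots.count x - 1 := hgT x hxT
      have h2 : f.roots.count x ≤ Mf := Finset.le_sup (f := fun r => f.roots.count r) hxT
      rw [h1]
      exact le_max_of_le_left (by omega)
    · have hxS : x ∈ S := Finset.mem_sdiff.2 ⟨hx, hxT⟩
      rw [hS1 x hxS]
      exact le_max_right _ _
  have hge : max (Mf - 1) 1 ≤ (U.sup fun r => g.roots.count r) := by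
    refine max_le ?_ ?_
    · rcases Nat.lt_or_ge Mf 2 with hM | hM
      · have : Mf - 1 = 0 := by omega
        rw [this]; exact Nat.zero_le _
      · obtain ⟨x, hxT, hxM⟩ := Finset.exists_mem_eq_sup T hT_ne fun r => f.roots.count r
        have h1 : g.roots.count x = Mf - 1 := by
          rw [hgT x hxT, ← hxM]
        have hxU : x ∈ U := by
          rw [hUdef]
          refine Multiset.mem_toFinset.2 (Multiset.count_pos.1 ?_)
          rw [h1]; omega
        calc Mf - 1 = g.roots.count x := h1.symm
        _ ≤ _ := Finset.le_sup (f := fun r => g.roots.count r) hxU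
    · obtain ⟨x, hxS⟩ := hS_ne
      have hxU : x ∈ U := (Finset.mem_sdiff.1 hxS).1
      calc (1 : ℕ) = g.roots.count x := (hS1 x hxS).symm
      _ ≤ _ := Finset.le_sup (f := fun r => g.roots.count r) hxU
  exact le_antisymm hle hge
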